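/- arXiv:2103.00338 — 2 statements merged into one kernel-verified Lean document; each statement's English description precedes it below -/
import Mathlib

section
/- Let $\Phi_2(\rho) = \frac{3}{2\rho^3}(2\rho - 3 + 4e^{-\rho} - e^{-2\rho})$ for $\rho \neq 0$ and $\Phi_2(0) = 1$. Then $\Phi_2(\rho) > 0$ for all $\rho \in \mathbb{R}$. -/
private noncomputable def phi2aux (ρ : ℝ) : ℝ :=
  2 * ρ - 3 + 4 * Real.exp (-ρ) - Real.exp (-(2 * ρ))

private lemma phi2aux_hasDeriv (ρ : ℝ) :
    HasDerivAt phi2aux (2 * (1 - Real.exp (-ρ)) ^ 2) ρ := by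
  have h1 : HasDerivAt (fun x : ℝ => Real.exp (-x)) (-Real.exp (-ρ)) ρ := by
    simpa [Function.comp_def] using (Real.hasDerivAt_exp (-ρ)).comp ρ ((hasDerivAt_id ρ).neg)
  have h2 : HasDerivAt (fun x : ℝ => Real.exp (-(2 * x))) (-2 * Real.exp (-(2 * ρ))) ρ := by
    have := (Real.hasDerivAt_exp (-(2 * ρ))).comp ρ
      (((hasDerivAt_id ρ).const_mul 2).neg)
    simpa [mul_comm, Function.comp_def, Pi.neg_def] using this
  have h3 : HasDerivAt (fun x : ℝ => 2 * x - 3 + 4 * Real.exp (-x) - Real.exp (-(2 * x)))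
      (2 + 4 * (-Real.exp (-ρ)) - (-2 * Real.exp (-(2 * ρ)))) ρ := by
    simpa [Pi.add_def, Pi.sub_def] using ((((hasDerivAt_id ρ).const_mul 2).sub_const 3).add (h1.const_mul 4)).sub h2
  have : (2 : ℝ) + 4 * (-Real.exp (-ρ)) - (-2 * Real.exp (-(2 * ρ)))
      = 2 * (1 - Real.exp (-ρ)) ^ 2 := by
    have : Real.exp (-(2 * ρ)) = Real.exp (-ρ) ^ 2 := by
      rw [← Real.exp_nat_mul]; ring_nf
    rw [this]; ring
  rw [this] at h3
  exact h3

private lemma phi2aux_pos {ρ : ℝ} (hρ : 0 < ρ) : 0 < phi2aux ρ := by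
  have hs : StrictMonoOn phi2aux (Set.Ici 0) := by
    apply strictMonoOn_of_deriv_pos (convex_Ici 0)
    · exact fun x _ => (phi2aux_hasDeriv x).continuousAt.continuousWithinAt
    · intro x hx
      rw [interior_Ici, Set.mem_Ioi] at hx
      rw [(phi2aux_hasDeriv x).deriv]
      have : Real.exp (-x) < 1 := by
        rw [Real.exp_lt_one_iff]; linarith
      nlinarith
  have h0 : phi2aux 0 = 0 := by norm_num [phi2aux]
  have := hs (Set.self_mem_Ici) (le_of_lt hρ) hρ
  rwa [h0] at this

private lemma phi2aux_neg {ρ : ℝ} (hρ : ρ < 0) : phi2aux ρ < 0 := by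
  have hs : StrictMonoOn phi2aux (Set.Iic 0) := by
    apply strictMonoOn_of_deriv_pos (convex_Iic 0)
    · exact fun x _ => (phi2aux_hasDeriv x).continuousAt.continuousWithinAt
    · intro x hx
      rw [interior_Iic, Set.mem_Iio] at hx
      rw [(phi2aux_hasDeriv x).deriv]
      have : 1 < Real.exp (-x) := by
        rw [← Real.exp_zero]; exact Real.exp_lt_exp.2 (by linarith)
      nlinarith
  have h0 : phi2aux 0 = 0 := by norm_num [phi2aux]
  have := hs (le_of_lt hρ) Set.self_mem_Iic hρ
  rwa [h0] at this

/-- `Φ₂(ρ) = (3/(2ρ³))(2ρ - 3 + 4e^{-ρ} - e^{-2ρ})` for `ρ ≠ 0`, `Φ₂(0) = 1`,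
is positive on all of `ℝ`. -/
theorem phi2_pos (Φ₂ : ℝ → ℝ)
    (h : ∀ ρ : ℝ, ρ ≠ 0 →
      Φ₂ ρ = 3 / (2 * ρ ^ 3) * (2 * ρ - 3 + 4 * Real.exp (-ρ) - Real.exp (-(2 * ρ))))
    (h0 : Φ₂ 0 = 1) :
    ∀ ρ : ℝ, 0 < Φ₂ ρ := by
  intro ρ
  rcases lt_trichotomy ρ 0 with hρ | hρ | hρ
  · rw [h ρ (ne_of_lt hρ)]
    have hg : phi2aux ρ < 0 := phi2aux_neg hρ
    have hc : 3 / (2 * ρ ^ 3) < 0 := by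
      apply div_neg_of_pos_of_neg (by norm_num)
      exact mul_neg_of_pos_of_neg (by norm_num) (Odd.pow_neg ⟨1, by norm_num⟩ hρ)
    have := mul_pos_of_neg_of_neg hc hg
    simpa [phi2aux] using this
  · rw [hρ]; rw [h0]; norm_num
  · rw [h ρ (ne_of_gt hρ)]
    have hg : 0 < phi2aux ρ := phi2aux_pos hρ
    have hc : 0 < 3 / (2 * ρ ^ 3) := by positivity
    have := mul_pos hc hg
    simpa [phi2aux] using this
end

section
/- The function $\phi : \mathbb{R} \to \mathbb{R}$ defined by $\phi(\rho) = \frac{6(1-e^{-\rho})}{\rho^4}\left(-2 + \rho + (2+\rho)e^{-\rho}\right)$ for $\rho \neq 0$ and $\phi(0) = 1$ satisfies $\phi(\rho) > 0$ for all $\rho \in \mathbb{R}$. -/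
private noncomputable def gfun : ℝ → ℝ := fun x => -2 + x + (2 + x) * Real.exp (-x)

private lemma gfun_hasDeriv (x : ℝ) :
    HasDerivAt gfun (1 - (1 + x) * Real.exp (-x)) x := by
  have he : HasDerivAt (fun x : ℝ => Real.exp (-x)) (-Real.exp (-x)) x := by
    simpa using (hasDerivAt_neg x).exp
  have h1 : HasDerivAt (fun x : ℝ => (2 + x) * Real.exp (-x))
      (1 * Real.exp (-x) + (2 + x) * (-Real.exp (-x))) x :=
    ((hasDerivAt_id x).const_add 2).mul he
  have h2 : HasDerivAt (fun x : ℝ => -2 + x) 1 x := (hasDerivAt_id x).const_add (-2)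
  have := h2.add h1
  convert this using 1
  · rfl
  · rfl
  · rfl
  ring

private lemma gfun_deriv_pos {x : ℝ} (hx : x ≠ 0) :
    0 < 1 - (1 + x) * Real.exp (-x) := by
  have key : (1 + x) * Real.exp (-x) < 1 := by
    have h1 : x + 1 < Real.exp x := Real.add_one_lt_exp hx
    have h2 : (1 + x) * Real.exp (-x) < Real.exp x * Real.exp (-x) := by
      apply mul_lt_mul_of_pos_right _ (Real.exp_pos _)
      linarith
    rwa [← Real.exp_add, add_neg_cancel, Real.exp_zero] at h2
  linarith

private lemma gfun_strictMono : StrictMono gfun := by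
  have hcont : Continuous gfun := by unfold gfun; continuity
  have key : ∀ s : Set ℝ, Convex ℝ s → (∀ x ∈ interior s, x ≠ 0) → StrictMonoOn gfun s := by
    intro s hs hne
    apply strictMonoOn_of_deriv_pos hs (hcont.continuousOn)
    intro x hx
    rw [(gfun_hasDeriv x).deriv]
    exact gfun_deriv_pos (hne x hx)
  have h1 : StrictMonoOn gfun (Set.Ici 0) := by
    apply key _ (convex_Ici 0)
    intro x hx
    rw [interior_Ici] at hx
    exact ne_of_gt hx
  have h2 : StrictMonoOn gfun (Set.Iic 0) := by
    apply key _ (convex_Iic 0)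
    intro x hx
    rw [interior_Iic] at hx
    exact ne_of_lt hx
  intro a b hab
  rcases le_or_gt 0 a with ha | ha
  · exact h1 ha (ha.trans hab.le) hab
  · rcases le_or_gt b 0 with hb | hb
    · exact h2 ha.le hb hab
    · calc gfun a < gfun 0 := h2 ha.le Set.self_mem_Iic ha
        _ < gfun b := h1 Set.self_mem_Ici hb.le hb

private lemma gfun_zero : gfun 0 = 0 := by simp [gfun]

/-- `φ(ρ) = (6(1-e^{-ρ})/ρ⁴)(-2 + ρ + (2+ρ)e^{-ρ})` for `ρ ≠ 0`, `φ(0) = 1`,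
is positive on all of `ℝ`. -/
theorem phi_pos (φ : ℝ → ℝ)
    (h : ∀ ρ : ℝ, ρ ≠ 0 →
      φ ρ = 6 * (1 - Real.exp (-ρ)) / ρ ^ 4 * (-2 + ρ + (2 + ρ) * Real.exp (-ρ)))
    (h0 : φ 0 = 1) :
    ∀ ρ : ℝ, 0 < φ ρ := by
  intro ρ
  rcases eq_or_ne ρ 0 with rfl | hρ
  · rw [h0]; norm_num
  · rw [h ρ hρ]
    have hρ4 : (0:ℝ) < ρ ^ 4 := by positivity
    have hg : (-2 + ρ + (2 + ρ) * Real.exp (-ρ)) = gfun ρ := rfl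
    rcases lt_or_gt_of_ne hρ with hlt | hgt
    · have hg_neg : gfun ρ < 0 := gfun_zero ▸ gfun_strictMono hlt
      have hexp : 1 < Real.exp (-ρ) := by
        rw [show (1:ℝ) = Real.exp 0 by simp]
        exact Real.exp_lt_exp.mpr (by linarith)
      have hfac : 6 * (1 - Real.exp (-ρ)) / ρ ^ 4 < 0 :=
        div_neg_of_neg_of_pos (by linarith) hρ4
      rw [hg]
      exact mul_pos_of_neg_of_neg hfac hg_neg
    · have hg_pos : 0 < gfun ρ := gfun_zero ▸ gfun_strictMono hgt
      have hexp : Real.exp (-ρ) < 1 := by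
        rw [show (1:ℝ) = Real.exp 0 by simp]
        exact Real.exp_lt_exp.mpr (by linarith)
      have hfac : 0 < 6 * (1 - Real.exp (-ρ)) / ρ ^ 4 :=
        div_pos (by linarith) hρ4
      rw [hg]
      exact mul_pos hfac hg_pos
end
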